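/- For each nonzero integer n, the map i_n : S³ \ L → (S³ \ L)/ℤ_{|n|} given by (u, v) ↦ (v/|v|)^{-1/n} · (u, |v|) is a well-defined homeomorphism with inverse (u, v) ↦ (u v⁻¹ |v|, v^{-n} |v|^{n+1}), where L = {(z, 0) : |z| = 1} ⊂ S³ ⊂ ℂ² and ℤ_{|n|} acts on S³ by (u, v) ↦ (ζu, ζv) with ζ = exp(2πi/|n|). -/

import Mathlib

open Complex

/-- The complement `S³ \ L` of the unknot `L = {(z,0) : |z| = 1}` in the unit
3-sphere `S³ = {(u,v) ∈ ℂ² : |u|² + |v|² = 1}`. -/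
def SphereMinusL : Type :=
  {p : ℂ × ℂ // ‖p.1‖ ^ 2 + ‖p.2‖ ^ 2 = 1 ∧ p.2 ≠ 0}

noncomputable instance : TopologicalSpace SphereMinusL :=
  instTopologicalSpaceSubtype

/-- The orbit relation of the `ℤ/|n|` action `(u,v) ↦ (ζu, ζv)`, `ζ = exp(2πi/|n|)`,
on `S³ \ L`. -/
def orbitRel (n : ℤ) (p q : SphereMinusL) : Prop :=
  ∃ k : ℤ, (q.1 : ℂ × ℂ) =
    (Complex.exp (2 * Real.pi * I / (|n| : ℤ)) ^ k * p.1.1,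
     Complex.exp (2 * Real.pi * I / (|n| : ℤ)) ^ k * p.1.2)

noncomputable section LensAux

namespace LensAux

/-- the primitive root of unity -/
def zeta (n : ℤ) : ℂ := Complex.exp (2 * Real.pi * I / (|n| : ℤ))

lemma zeta_ne_zero (n : ℤ) : zeta n ≠ 0 := Complex.exp_ne_zero _

lemma abs_zeta (n : ℤ) : ‖zeta n‖ = 1 := by
  have h : (2 * (Real.pi : ℂ) * I / ((|n| : ℤ) : ℂ))
      = ((2 * Real.pi / ((|n| : ℤ) : ℝ) : ℝ) : ℂ) * I := by
    rw [← Complex.ofReal_intCast]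
    push_cast
    ring
  rw [zeta, h, Complex.norm_exp_ofReal_mul_I]

lemma zeta_zpow_n (n : ℤ) (hn : n ≠ 0) : zeta n ^ n = 1 := by
  rw [zeta, ← Complex.exp_int_mul]
  rcases lt_or_gt_of_ne hn with h | h
  · have hc : ((-n : ℤ) : ℂ) ≠ 0 := Int.cast_ne_zero.2 (neg_ne_zero.2 hn)
    rw [abs_of_neg h]
    have hcn : ((n : ℤ) : ℂ) ≠ 0 := Int.cast_ne_zero.2 hn
    have : ((n : ℤ) : ℂ) * (2 * (Real.pi : ℂ) * I / ((-n : ℤ) : ℂ))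
        = -(2 * (Real.pi : ℂ) * I) := by
      push_cast
      field_simp
    rw [this, Complex.exp_neg, Complex.exp_two_pi_mul_I, inv_one]
  · have hc : ((n : ℤ) : ℂ) ≠ 0 := Int.cast_ne_zero.2 hn
    rw [abs_of_pos h]
    have : ((n : ℤ) : ℂ) * (2 * (Real.pi : ℂ) * I / ((n : ℤ) : ℂ))
        = 2 * (Real.pi : ℂ) * I := by field_simp
    rw [this, Complex.exp_two_pi_mul_I]

/-- any two `n`-th roots of the same nonzero number differ by a power of `zeta n`. -/
lemma exists_zeta_pow (n : ℤ) (hn : n ≠ 0) {w w' : ℂ} (hw' : w' ≠ 0)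
    (h : w ^ n = w' ^ n) : ∃ k : ℤ, w = zeta n ^ k * w' := by
  have hz : (w / w') ^ n = 1 := by
    rw [div_zpow, h, div_self (zpow_ne_zero n hw')]
  have hz2 : (w / w') ^ (n.natAbs) = 1 := by
    rcases Int.natAbs_eq n with he | he
    · rw [he, zpow_natCast] at hz; exact hz
    · rw [he, zpow_neg, inv_eq_one, zpow_natCast] at hz; exact hz
  haveI : NeZero n.natAbs := ⟨Int.natAbs_ne_zero.2 hn⟩
  have hprim := Complex.isPrimitiveRoot_exp n.natAbs (Int.natAbs_ne_zero.2 hn)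
  obtain ⟨i, _, hi⟩ := hprim.eq_pow_of_pow_eq_one hz2
  have hcast : ((|n| : ℤ) : ℂ) = (n.natAbs : ℂ) := by
    rw [Int.abs_eq_natAbs, Int.cast_natCast]
  have hzeta : zeta n = Complex.exp (2 * Real.pi * I / (n.natAbs : ℂ)) := by
    rw [zeta, hcast]
  refine ⟨(i : ℤ), ?_⟩
  rw [hzeta, zpow_natCast, hi, div_mul_cancel₀ _ hw']

/-- the target of the root map. -/
def c (p : SphereMinusL) : ℂ := (p.1.2 / (‖p.1.2‖ : ℂ))⁻¹

lemma abs_c (p : SphereMinusL) : ‖c p‖ = 1 := by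
  have hv : p.1.2 ≠ 0 := p.2.2
  have ha : ‖p.1.2‖ ≠ 0 := norm_ne_zero_iff.mpr hv
  rw [c, norm_inv, norm_div, Complex.norm_real, Real.norm_eq_abs, _root_.abs_of_nonneg (norm_nonneg _),
    div_self ha, inv_one]

lemma c_ne_zero (p : SphereMinusL) : c p ≠ 0 := by
  intro h
  have := abs_c p
  rw [h, norm_zero] at this
  norm_num at this

lemma root_ne_zero (n : ℤ) (hn : n ≠ 0) {p : SphereMinusL} {w : ℂ} (hw : w ^ n = c p) :
    w ≠ 0 := by
  intro h0
  rw [h0, zero_zpow n hn] at hw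
  exact c_ne_zero p hw.symm

lemma abs_root (n : ℤ) (hn : n ≠ 0) {p : SphereMinusL} {w : ℂ} (hw : w ^ n = c p) :
    ‖w‖ = 1 := by
  have hw0 : w ≠ 0 := root_ne_zero n hn hw
  have habs : ‖w‖ ^ n = 1 := by
    rw [← norm_zpow, hw, abs_c]
  have hlog : Real.log (‖w‖) = 0 := by
    have h := Real.log_zpow (‖w‖) n
    rw [habs, Real.log_one] at h
    have := h.symm
    rcases mul_eq_zero.1 this with h' | h'
    · exact absurd h' (by exact_mod_cast hn)
    · exact h'
  rcases (Real.log_eq_zero).1 hlog with h' | h' | h'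
  · exact absurd h' (norm_ne_zero_iff.mpr hw0)
  · exact h'
  · exfalso
    have hnn := norm_nonneg w
    rw [h'] at hnn
    linarith

lemma point_mem (n : ℤ) (hn : n ≠ 0) (p : SphereMinusL) {w : ℂ} (hw : w ^ n = c p) :
    ‖w * p.1.1‖ ^ 2 + ‖w * (‖p.1.2‖ : ℂ)‖ ^ 2 = 1 ∧
      w * (‖p.1.2‖ : ℂ) ≠ 0 := by
  have hv : p.1.2 ≠ 0 := p.2.2
  have ha : ‖p.1.2‖ ≠ 0 := norm_ne_zero_iff.mpr hv
  have h1 : ‖w‖ = 1 := abs_root n hn hw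
  constructor
  · rw [norm_mul, norm_mul, h1, one_mul, one_mul, Complex.norm_real, Real.norm_eq_abs, _root_.abs_of_nonneg (norm_nonneg _)]
    exact p.2.1
  · exact mul_ne_zero (root_ne_zero n hn hw) (Complex.ofReal_ne_zero.2 ha)

/-- the point `(w u, w |v|)` for an `n`-th root `w` of `(v/|v|)⁻¹`. -/
def pointOf (n : ℤ) (hn : n ≠ 0) (p : SphereMinusL) (w : ℂ) (hw : w ^ n = c p) :
    SphereMinusL :=
  ⟨(w * p.1.1, w * (‖p.1.2‖ : ℂ)), point_mem n hn p hw⟩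

lemma quot_point (n : ℤ) (hn : n ≠ 0) (p : SphereMinusL) {w w' : ℂ}
    (hw : w ^ n = c p) (hw' : w' ^ n = c p) :
    Quot.mk (orbitRel n) (pointOf n hn p w hw) = Quot.mk (orbitRel n) (pointOf n hn p w' hw') := by
  obtain ⟨k, hk⟩ := exists_zeta_pow n hn (root_ne_zero n hn hw) (hw'.trans hw.symm)
  refine Quot.sound ⟨k, ?_⟩
  show ((w' * p.1.1, w' * (‖p.1.2‖ : ℂ)) : ℂ × ℂ)
      = (zeta n ^ k * (w * p.1.1), zeta n ^ k * (w * (‖p.1.2‖ : ℂ)))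
  rw [hk]
  exact Prod.ext (by ring) (by ring)

lemma abs_gmap_snd (n : ℤ) (p : SphereMinusL) :
    ‖p.1.2 ^ (-n) * (‖p.1.2‖ : ℂ) ^ (n + 1)‖ = ‖p.1.2‖ := by
  have hv : p.1.2 ≠ 0 := p.2.2
  have ha : ‖p.1.2‖ ≠ 0 := norm_ne_zero_iff.mpr hv
  rw [norm_mul, norm_zpow, norm_zpow, Complex.norm_real, Real.norm_eq_abs, _root_.abs_of_nonneg (norm_nonneg _),
    ← zpow_add₀ ha, show -n + (n + 1) = 1 by ring, zpow_one]

/-- the inverse map `(u,v) ↦ (u v⁻¹ |v|, v^{-n} |v|^{n+1})`. -/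
def gmap (n : ℤ) (p : SphereMinusL) : SphereMinusL :=
  ⟨(p.1.1 * p.1.2⁻¹ * (‖p.1.2‖ : ℂ),
    p.1.2 ^ (-n) * (‖p.1.2‖ : ℂ) ^ (n + 1)), by
    have hv : p.1.2 ≠ 0 := p.2.2
    have ha : ‖p.1.2‖ ≠ 0 := norm_ne_zero_iff.mpr hv
    constructor
    · rw [abs_gmap_snd]
      have h1 : ‖p.1.1 * p.1.2⁻¹ * (‖p.1.2‖ : ℂ)‖
          = ‖p.1.1‖ := by
        rw [norm_mul, norm_mul, norm_inv, Complex.norm_real, Real.norm_eq_abs, _root_.abs_of_nonneg (norm_nonneg _)]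
        field_simp
      rw [h1]; exact p.2.1
    · exact mul_ne_zero (zpow_ne_zero _ hv)
        (zpow_ne_zero _ (Complex.ofReal_ne_zero.2 ha))⟩

lemma gmap_invariant (n : ℤ) (hn : n ≠ 0) :
    ∀ p q : SphereMinusL, orbitRel n p q → gmap n p = gmap n q := by
  rintro p q ⟨k, hk⟩
  have hk1 : q.1.1 = zeta n ^ k * p.1.1 := by rw [hk]; rfl
  have hk2 : q.1.2 = zeta n ^ k * p.1.2 := by rw [hk]; rfl
  have hz0 : zeta n ^ k ≠ 0 := zpow_ne_zero _ (zeta_ne_zero n)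
  have hv : p.1.2 ≠ 0 := p.2.2
  have habsz : ‖zeta n ^ k * p.1.2‖ = ‖p.1.2‖ := by
    rw [norm_mul, norm_zpow, abs_zeta, one_zpow, one_mul]
  have hpow : (zeta n ^ k) ^ (-n) = 1 := by
    rw [← zpow_mul, show k * -n = n * -k by ring, zpow_mul, zeta_zpow_n n hn, one_zpow]
  apply Subtype.ext
  apply Prod.ext
  · show p.1.1 * p.1.2⁻¹ * (‖p.1.2‖ : ℂ)
      = q.1.1 * q.1.2⁻¹ * (‖q.1.2‖ : ℂ)
    rw [hk1, hk2, habsz, mul_inv]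
    field_simp
  · show p.1.2 ^ (-n) * (‖p.1.2‖ : ℂ) ^ (n + 1)
      = q.1.2 ^ (-n) * (‖q.1.2‖ : ℂ) ^ (n + 1)
    rw [hk2, habsz, mul_zpow, hpow, one_mul]

lemma gmap_point (n : ℤ) (hn : n ≠ 0) (p : SphereMinusL) {w : ℂ} (hw : w ^ n = c p) :
    gmap n (pointOf n hn p w hw) = p := by
  have hv : p.1.2 ≠ 0 := p.2.2
  have ha : ‖p.1.2‖ ≠ 0 := norm_ne_zero_iff.mpr hv
  have haC : ((‖p.1.2‖ : ℝ) : ℂ) ≠ 0 := Complex.ofReal_ne_zero.2 ha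
  have hw0 : w ≠ 0 := root_ne_zero n hn hw
  have h1 : ‖w‖ = 1 := abs_root n hn hw
  have habs : ‖w * (‖p.1.2‖ : ℂ)‖ = ‖p.1.2‖ := by
    rw [norm_mul, h1, one_mul, Complex.norm_real, Real.norm_eq_abs, _root_.abs_of_nonneg (norm_nonneg _)]
  apply Subtype.ext
  apply Prod.ext
  · show w * p.1.1 * (w * (‖p.1.2‖ : ℂ))⁻¹ *
      ((‖w * (‖p.1.2‖ : ℂ)‖ : ℝ) : ℂ) = p.1.1
    rw [habs, mul_inv]
    field_simp
  · show (w * (‖p.1.2‖ : ℂ)) ^ (-n) *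
      ((‖w * (‖p.1.2‖ : ℂ)‖ : ℝ) : ℂ) ^ (n + 1) = p.1.2
    rw [habs, mul_zpow, zpow_neg w n, hw, c, inv_inv, mul_assoc,
      ← zpow_add₀ haC, show -n + (n + 1) = 1 by ring, zpow_one, div_mul_cancel₀ _ haC]

/-- the canonical choice of root. -/
def wdef (n : ℤ) (p : SphereMinusL) : ℂ := Complex.exp (Complex.log (c p) / n)

lemma wdef_pow (n : ℤ) (hn : n ≠ 0) (p : SphereMinusL) : wdef n p ^ n = c p := by
  have hc : ((n : ℤ) : ℂ) ≠ 0 := Int.cast_ne_zero.2 hn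
  rw [wdef, ← Complex.exp_int_mul]
  have : ((n : ℤ) : ℂ) * (Complex.log (c p) / n) = Complex.log (c p) := by field_simp
  rw [this, Complex.exp_log (c_ne_zero p)]

/-- the forward map into the quotient. -/
def fmapQ (n : ℤ) (hn : n ≠ 0) (p : SphereMinusL) : Quot (orbitRel n) :=
  Quot.mk (orbitRel n) (pointOf n hn p (wdef n p) (wdef_pow n hn p))

lemma fg (n : ℤ) (hn : n ≠ 0) (p : SphereMinusL) :
    fmapQ n hn (gmap n p) = Quot.mk (orbitRel n) p := by
  have hv : p.1.2 ≠ 0 := p.2.2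
  have ha : ‖p.1.2‖ ≠ 0 := norm_ne_zero_iff.mpr hv
  have haC : ((‖p.1.2‖ : ℝ) : ℂ) ≠ 0 := Complex.ofReal_ne_zero.2 ha
  set q := gmap n p with hq
  have habsq : ‖q.1.2‖ = ‖p.1.2‖ := abs_gmap_snd n p
  have hq2 : q.1.2 = p.1.2 ^ (-n) * (‖p.1.2‖ : ℂ) ^ (n + 1) := rfl
  have hq1 : q.1.1 = p.1.1 * p.1.2⁻¹ * (‖p.1.2‖ : ℂ) := rfl
  have hq20 : q.1.2 ≠ 0 := q.2.2
  have h' : (p.1.2 / (‖p.1.2‖ : ℂ)) ^ n = c q := by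
    rw [c, inv_div, habsq, div_zpow]
    rw [div_eq_div_iff (zpow_ne_zero _ haC) hq20]
    rw [hq2, show p.1.2 ^ n * (p.1.2 ^ (-n) * (‖p.1.2‖ : ℂ) ^ (n + 1))
        = (p.1.2 ^ n * p.1.2 ^ (-n)) * (‖p.1.2‖ : ℂ) ^ (n + 1) by ring,
      ← zpow_add₀ hv, add_neg_cancel, zpow_zero, one_mul,
      show ((‖p.1.2‖ : ℂ)) ^ ((n : ℤ) + 1)
        = (‖p.1.2‖ : ℂ) ^ (1 + n : ℤ) by ring_nf,
      zpow_add₀ haC, zpow_one]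
  rw [fmapQ, quot_point n hn q (wdef_pow n hn q) h']
  congr 1
  apply Subtype.ext
  apply Prod.ext
  · show p.1.2 / (‖p.1.2‖ : ℂ) * q.1.1 = p.1.1
    rw [hq1]
    field_simp
  · show p.1.2 / (‖p.1.2‖ : ℂ) * ((‖q.1.2‖ : ℝ) : ℂ) = p.1.2
    rw [habsq, div_mul_cancel₀ _ haC]

/-- the underlying equivalence. -/
def theEquiv (n : ℤ) (hn : n ≠ 0) : SphereMinusL ≃ Quot (orbitRel n) where
  toFun := fmapQ n hn
  invFun := Quot.lift (gmap n) (gmap_invariant n hn)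
  left_inv p := gmap_point n hn p (wdef_pow n hn p)
  right_inv := by
    refine Quot.ind fun p => ?_
    exact fg n hn p

lemma continuous_u : Continuous fun p : SphereMinusL => p.1.1 :=
  continuous_fst.comp continuous_subtype_val

lemma continuous_v : Continuous fun p : SphereMinusL => p.1.2 :=
  continuous_snd.comp continuous_subtype_val

lemma continuous_a : Continuous fun p : SphereMinusL => ((‖p.1.2‖ : ℝ) : ℂ) :=
  Complex.continuous_ofReal.comp (continuous_norm.comp continuous_v)

lemma continuous_gmap (n : ℤ) : Continuous (gmap n) := by
  apply Continuous.subtype_mk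
  apply Continuous.prodMk
  · exact (continuous_u.mul ((continuous_v).inv₀ fun p => p.2.2)).mul continuous_a
  · exact (continuous_v.zpow₀ (-n) fun p => Or.inl p.2.2).mul
      (continuous_a.zpow₀ (n + 1) fun p =>
        Or.inl (Complex.ofReal_ne_zero.2 (norm_ne_zero_iff.mpr p.2.2)))

lemma continuous_c : Continuous c := by
  apply Continuous.inv₀
  · exact continuous_v.div continuous_a fun p =>
      Complex.ofReal_ne_zero.2 (norm_ne_zero_iff.mpr p.2.2)
  · exact fun p => div_ne_zero p.2.2
      (Complex.ofReal_ne_zero.2 (norm_ne_zero_iff.mpr p.2.2))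

lemma continuous_fmapQ (n : ℤ) (hn : n ≠ 0) : Continuous (fmapQ n hn) := by
  rw [continuous_iff_continuousAt]
  intro p₀
  have hc0 : c p₀ ≠ 0 := c_ne_zero p₀
  set w₀ := wdef n p₀ with hw₀
  have hcn : ((n : ℤ) : ℂ) ≠ 0 := Int.cast_ne_zero.2 hn
  have hpow : ∀ p : SphereMinusL,
      (w₀ * Complex.exp (Complex.log (c p / c p₀) / n)) ^ n = c p := by
    intro p
    rw [mul_zpow, wdef_pow n hn p₀, ← Complex.exp_int_mul]
    have h1 : ((n : ℤ) : ℂ) * (Complex.log (c p / c p₀) / n) = Complex.log (c p / c p₀) := by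
      field_simp
    rw [h1, Complex.exp_log (div_ne_zero (c_ne_zero p) hc0), mul_comm,
      div_mul_cancel₀ _ hc0]
  have heq : fmapQ n hn = fun p => Quot.mk (orbitRel n)
      (pointOf n hn p (w₀ * Complex.exp (Complex.log (c p / c p₀) / n)) (hpow p)) := by
    funext p
    exact quot_point n hn p (wdef_pow n hn p) (hpow p)
  rw [heq]
  apply ContinuousAt.comp continuous_quot_mk.continuousAt
  refine (Topology.IsInducing.continuousAt_iff (Topology.IsInducing.subtypeVal :
    Topology.IsInducing (Subtype.val : SphereMinusL → ℂ × ℂ))).2 ?_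
  have hw : ContinuousAt (fun p : SphereMinusL =>
      w₀ * Complex.exp (Complex.log (c p / c p₀) / n)) p₀ := by
    apply ContinuousAt.mul continuousAt_const
    apply Complex.continuous_exp.continuousAt.comp
    apply ContinuousAt.div_const
    refine ContinuousAt.clog ((continuous_c.div_const (c p₀)).continuousAt) ?_
    rw [div_self hc0]
    exact Complex.one_mem_slitPlane
  exact ContinuousAt.prodMk (hw.mul continuous_u.continuousAt)
    (hw.mul continuous_a.continuousAt)

end LensAux

end LensAux

open LensAux in
/-- **Surgery on the unknot and lens spaces.**
For each nonzero integer `n`, the map `i_n : S³ \ L → (S³ \ L)/ℤ_{|n|}`,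
`(u,v) ↦ (v/|v|)^{-1/n} · (u, |v|)`, is a well-defined homeomorphism with inverse
induced by `(u,v) ↦ (u v⁻¹ |v|, v^{-n} |v|^{n+1})`: there is a homeomorphism `h`
such that `h p` is the class of `(w u, w |v|)` for any `w` with `w^n = (v/|v|)⁻¹`,
and `h⁻¹` of the class of `(u,v)` is `(u v⁻¹ |v|, v^{-n} |v|^{n+1})`. -/
theorem lens_space_homeomorph (n : ℤ) (hn : n ≠ 0) :
    ∃ h : SphereMinusL ≃ₜ Quot (orbitRel n),
      (∀ p : SphereMinusL, ∀ w : ℂ,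
        w ^ n = ((p.1.2 / (‖p.1.2‖ : ℂ)))⁻¹ →
        ∃ q : SphereMinusL, h p = Quot.mk (orbitRel n) q ∧
          (q.1 : ℂ × ℂ) = (w * p.1.1, w * (‖p.1.2‖ : ℂ))) ∧
      (∀ p : SphereMinusL,
        ((h.symm (Quot.mk (orbitRel n) p)).1 : ℂ × ℂ) =
          (p.1.1 * p.1.2⁻¹ * (‖p.1.2‖ : ℂ),
           p.1.2 ^ (-n) * (‖p.1.2‖ : ℂ) ^ (n + 1))) := by
  refine ⟨{ toEquiv := theEquiv n hn,
            continuous_toFun := continuous_fmapQ n hn,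
            continuous_invFun := continuous_quot_lift _ (continuous_gmap n) }, ?_, ?_⟩
  · intro p w hw
    exact ⟨pointOf n hn p w hw, quot_point n hn p (wdef_pow n hn p) hw, rfl⟩
  · intro p
    show ((Quot.lift (gmap n) (gmap_invariant n hn) (Quot.mk (orbitRel n) p)).1 : ℂ × ℂ) = _
    rfl
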